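/- Let f : [0,1]^d → ℝ be continuous, δ ∈ (0,1), N a positive integer, p ∈ [1,∞). Then there exist a₁,...,a_N ∈ [0,2/9) such that ∫_{[0,1]^d} |φ(x) − f(x)|^p dx ≤ (2ω_f(√d)2^{-N} + ω_f(√d·2^{-N}))^p + 2^p d δ (|f(0)| + ω_f(√d))^p, where φ(x) = 2ω_f(√d)Σ_{j=1}^N 2^{-j} ϱ₃( a_j · 3^{1 + Σ_{i=1}^d 2^{(i−1)N} ϱ_{1,δ}(2^N x_i)} ) + f(0) − ω_f(√d). -/

import Mathlib

open MeasureTheory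

/-- ϱ_{1,δ}: the continuous piecewise linear approximation of the floor function. -/
noncomputable def rho1 (δ x : ℝ) : ℝ :=
  if Int.fract x ≤ 1 - δ then ⌊x⌋ else ⌊x⌋ + (Int.fract x - (1 - δ)) / δ

/-- T̃(t) = 0 for t > cos(4π/9), 1 − t/cos(4π/9) for 0 ≤ t ≤ cos(4π/9), 1 for t < 0. -/
noncomputable def Ttilde (t : ℝ) : ℝ :=
  if t > Real.cos (4 * Real.pi / 9) then 0
  else if 0 ≤ t then 1 - t / Real.cos (4 * Real.pi / 9)
  else 1

/-- ϱ₃(x) = T̃(cos(2πx)). -/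
noncomputable def rho3 (x : ℝ) : ℝ := Ttilde (Real.cos (2 * Real.pi * x))

/-- The unit cube [0,1]^d in Euclidean space. -/
def unitCube (d : ℕ) : Set (EuclideanSpace ℝ (Fin d)) := {x | ∀ i, x i ∈ Set.Icc (0:ℝ) 1}

/-- Modulus of continuity of f on [0,1]^d with respect to the Euclidean norm. -/
noncomputable def modCont (d : ℕ) (f : EuclideanSpace ℝ (Fin d) → ℝ) (r : ℝ) : ℝ :=
  sSup {t | ∃ x ∈ unitCube d, ∃ y ∈ unitCube d, ‖x - y‖ ≤ r ∧ t = |f x - f y|}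

open Finset

lemma sum_lt_pow (B : ℕ) (hB : 1 ≤ B) (k : ℕ → ℕ) :
    ∀ n, (∀ i < n, k i < B) → ∑ i ∈ range n, k i * B ^ i < B ^ n := by
  intro n
  induction n with
  | zero => simp
  | succ n ih =>
    intro h
    rw [Finset.sum_range_succ]
    have h1 : ∑ i ∈ range n, k i * B ^ i < B ^ n := ih (fun i hi => h i (by omega))
    have h2 : k n ≤ B - 1 := by have := h n (by omega); omega
    have h3 : k n * B ^ n ≤ (B - 1) * B ^ n := Nat.mul_le_mul_right _ h2
    have h4 : B ^ n + (B - 1) * B ^ n = B ^ (n + 1) := by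
      obtain ⟨c, rfl⟩ := Nat.exists_eq_add_of_le hB
      have hc : 1 + c - 1 = c := by omega
      rw [hc, pow_succ]; ring
    omega

lemma digit_decode (B : ℕ) (hB : 1 ≤ B) (k : ℕ → ℕ) (n : ℕ) (hk : ∀ i < n, k i < B)
    (i0 : ℕ) (hi0 : i0 < n) :
    (∑ i ∈ range n, k i * B ^ i) / B ^ i0 % B = k i0 := by
  have hsplit : ∑ i ∈ range n, k i * B ^ i
      = (∑ i ∈ range i0, k i * B ^ i) + k i0 * B ^ i0
        + (∑ i ∈ Ico (i0+1) n, k i * B ^ i) := by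
    rw [← Finset.sum_range_succ]
    exact (Finset.sum_range_add_sum_Ico _ (by omega)).symm
  have hlow : ∑ i ∈ range i0, k i * B ^ i < B ^ i0 :=
    sum_lt_pow B hB k i0 (fun i hi => hk i (by omega))
  have hhigh : ∃ C, ∑ i ∈ Ico (i0+1) n, k i * B ^ i = B ^ i0 * (B * C) := by
    refine ⟨∑ i ∈ Ico (i0+1) n, k i * B ^ (i - (i0+1)), ?_⟩
    rw [Finset.mul_sum, Finset.mul_sum]
    apply Finset.sum_congr rfl
    intro i hi
    simp only [Finset.mem_Ico] at hi
    have : B ^ i = B ^ i0 * (B * B ^ (i - (i0+1))) := by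
      rw [← pow_succ', ← pow_add]
      congr 1
      omega
    rw [this]; ring
  obtain ⟨C, hC⟩ := hhigh
  rw [hsplit, hC]
  have hpos : 0 < B ^ i0 := Nat.pow_pos hB
  rw [Nat.add_mul_div_left _ _ hpos, Nat.add_mul_div_right _ _ hpos,
    Nat.div_eq_of_lt hlow]
  simp [Nat.add_mul_mod_self_left, Nat.mod_eq_of_lt (hk i0 hi0)]

lemma bits_sum : ∀ (N n : ℕ), n < 2 ^ N → ∑ i ∈ range N, (n / 2 ^ i % 2) * 2 ^ i = n := by
  intro N
  induction N with
  | zero => intro n h; interval_cases n <;> simp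
  | succ N ih =>
    intro n h
    rw [Finset.sum_range_succ']
    have h2 : ∀ i : ℕ, n / 2 ^ (i + 1) % 2 * 2 ^ (i+1) = 2 * ((n/2) / 2 ^ i % 2 * 2 ^ i) := by
      intro i
      have hd : n / 2 ^ (i+1) = (n/2) / 2 ^ i := by
        rw [Nat.div_div_eq_div_mul, pow_succ']
      rw [hd, pow_succ']; ring
    have : ∑ i ∈ range N, n / 2 ^ (i+1) % 2 * 2 ^ (i+1)
        = 2 * ∑ i ∈ range N, (n/2) / 2 ^ i % 2 * 2 ^ i := by
      rw [Finset.mul_sum]; exact Finset.sum_congr rfl fun i _ => h2 i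
    rw [this, ih (n / 2) (by omega)]
    simp
    omega
lemma cos49_pos : 0 < Real.cos (4 * Real.pi / 9) := by
  apply Real.cos_pos_of_mem_Ioo
  constructor
  · nlinarith [Real.pi_pos]
  · nlinarith [Real.pi_pos]

lemma cos49_lt_half : Real.cos (4 * Real.pi / 9) < 1 / 2 := by
  have h := Real.cos_lt_cos_of_nonneg_of_le_pi (x := Real.pi / 3) (y := 4 * Real.pi / 9)
    (by positivity) (by nlinarith [Real.pi_pos]) (by nlinarith [Real.pi_pos])
  rwa [Real.cos_pi_div_three] at h

lemma Ttilde_mem (t : ℝ) : Ttilde t ∈ Set.Icc (0:ℝ) 1 := by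
  unfold Ttilde
  split_ifs with h1 h2
  · norm_num
  · push_neg at h1
    constructor
    · have : t / Real.cos (4 * Real.pi / 9) ≤ 1 := by
        rw [div_le_one cos49_pos]; exact h1
      linarith
    · have : 0 ≤ t / Real.cos (4 * Real.pi / 9) := div_nonneg h2 cos49_pos.le
      linarith
  · norm_num

lemma rho3_mem (x : ℝ) : rho3 x ∈ Set.Icc (0:ℝ) 1 := Ttilde_mem _

lemma rho3_int_add (n : ℤ) (u : ℝ) : rho3 (n + u) = rho3 u := by
  unfold rho3
  congr 1
  have : 2 * Real.pi * (↑n + u) = 2 * Real.pi * u + ↑n * (2 * Real.pi) := by ring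
  rw [this, Real.cos_add_int_mul_two_pi]

lemma rho3_eq_zero {u : ℝ} (h0 : 0 ≤ u) (h1 : u ≤ 1/6) : rho3 u = 0 := by
  have hcos : Real.cos (Real.pi / 3) ≤ Real.cos (2 * Real.pi * u) := by
    apply Real.cos_le_cos_of_nonneg_of_le_pi (by positivity)
      (by nlinarith [Real.pi_pos]) (by nlinarith [Real.pi_pos])
  rw [Real.cos_pi_div_three] at hcos
  unfold rho3 Ttilde
  rw [if_pos (lt_of_lt_of_le cos49_lt_half hcos)]

lemma rho3_eq_one {u : ℝ} (h0 : 1/3 ≤ u) (h1 : u ≤ 1/2) : rho3 u = 1 := by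
  have hcos : Real.cos (2 * Real.pi * u) ≤ Real.cos (2 * Real.pi / 3) := by
    apply Real.cos_le_cos_of_nonneg_of_le_pi (by positivity)
      (by nlinarith [Real.pi_pos]) (by nlinarith [Real.pi_pos])
  have h23 : Real.cos (2 * Real.pi / 3) = -(1/2) := by
    have : 2 * Real.pi / 3 = Real.pi - Real.pi / 3 := by ring
    rw [this, Real.cos_pi_sub, Real.cos_pi_div_three]
  rw [h23] at hcos
  have hneg : Real.cos (2 * Real.pi * u) < 0 := by linarith
  unfold rho3 Ttilde
  rw [if_neg (by push_neg; exact le_of_lt (lt_trans hneg cos49_pos)), if_neg (by linarith)]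
lemma geo_sum_eq (n : ℕ) : ∑ k ∈ range n, ((3:ℝ)^(k+2))⁻¹ = (1 - ((3:ℝ)⁻¹)^n) / 6 := by
  induction n with
  | zero => simp
  | succ n ih =>
    rw [Finset.sum_range_succ, ih, pow_succ, pow_succ]
    have h9 : (3:ℝ) ^ n ≠ 0 := by positivity
    simp only [inv_pow]
    field_simp
    ring

lemma geo_sum_le (n : ℕ) : ∑ k ∈ range n, ((3:ℝ)^(k+2))⁻¹ ≤ 1/6 := by
  rw [geo_sum_eq]
  have : (0:ℝ) ≤ ((3:ℝ)⁻¹)^n := by positivity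
  linarith

lemma bit_a_nonneg (M : ℕ) (bits : ℕ → ℕ) :
    0 ≤ ∑ m ∈ range M, (bits m : ℝ) * ((3:ℝ)^(m+2))⁻¹ :=
  Finset.sum_nonneg fun m _ => by positivity

lemma bit_a_le (M : ℕ) (bits : ℕ → ℕ) (hb : ∀ m, bits m ≤ 1) :
    ∑ m ∈ range M, (bits m : ℝ) * ((3:ℝ)^(m+2))⁻¹ ≤ 1/6 := by
  calc ∑ m ∈ range M, (bits m : ℝ) * ((3:ℝ)^(m+2))⁻¹
      ≤ ∑ m ∈ range M, ((3:ℝ)^(m+2))⁻¹ := by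
        apply Finset.sum_le_sum
        intro m _
        have h1 : (bits m : ℝ) ≤ 1 := by exact_mod_cast hb m
        have h2 : (0:ℝ) < ((3:ℝ)^(m+2))⁻¹ := by positivity
        nlinarith
    _ ≤ 1/6 := geo_sum_le M

lemma bitextract (M : ℕ) (bits : ℕ → ℕ) (hb : ∀ m, bits m ≤ 1)
    (m0 : ℕ) (hm0 : m0 < M) :
    rho3 ((∑ m ∈ range M, (bits m : ℝ) * ((3:ℝ)^(m+2))⁻¹) * 3^(m0+1)) = bits m0 := by
  set T : ℝ := ∑ m ∈ Ico (m0+1) M, (bits m : ℝ) * ((3:ℝ)^(m+2))⁻¹ * 3^(m0+1) with hT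
  set I : ℕ := ∑ m ∈ range m0, bits m * 3^(m0-1-m) with hI
  have hsplit : (∑ m ∈ range M, (bits m : ℝ) * ((3:ℝ)^(m+2))⁻¹) * 3^(m0+1)
      = (I:ℝ) + ((bits m0 : ℝ)/3 + T) := by
    rw [Finset.sum_mul, ← Finset.sum_range_add_sum_Ico _ (Nat.succ_le_of_lt hm0),
      Finset.sum_range_succ]
    have hmid : (bits m0 : ℝ) * ((3:ℝ)^(m0+2))⁻¹ * 3^(m0+1) = (bits m0 : ℝ)/3 := by
      have : (3:ℝ)^(m0+2) = 3^(m0+1) * 3 := by rw [pow_succ]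
      rw [this]
      field_simp
    have hlow : ∑ m ∈ range m0, (bits m : ℝ) * ((3:ℝ)^(m+2))⁻¹ * 3^(m0+1) = (I:ℝ) := by
      rw [hI]
      push_cast
      apply Finset.sum_congr rfl
      intro m hm
      simp only [Finset.mem_range] at hm
      have hexp : (3:ℝ)^(m0+1) = 3^(m0-1-m) * 3^(m+2) := by
        rw [← pow_add]
        congr 1
        omega
      rw [hexp]
      have : (3:ℝ)^(m+2) ≠ 0 := by positivity
      field_simp
    rw [hmid, hlow]
    ring
  rw [hsplit]
  have hTnn : 0 ≤ T := Finset.sum_nonneg fun m _ => by positivity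
  have hTle : T ≤ 1/6 := by
    rw [hT, Finset.sum_Ico_eq_sum_range]
    calc ∑ k ∈ range (M - (m0+1)), (bits (m0+1+k) : ℝ) * ((3:ℝ)^(m0+1+k+2))⁻¹ * 3^(m0+1)
        ≤ ∑ k ∈ range (M - (m0+1)), ((3:ℝ)^(k+2))⁻¹ := by
          apply Finset.sum_le_sum
          intro k _
          have hexp : (3:ℝ)^(m0+1+k+2) = 3^(k+2) * 3^(m0+1) := by
            rw [← pow_add]; congr 1; omega
          rw [hexp]
          have h1 : (bits (m0+1+k) : ℝ) ≤ 1 := by exact_mod_cast hb _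
          have h2 : (0:ℝ) < (3:ℝ)^(k+2) := by positivity
          have h3 : (0:ℝ) < (3:ℝ)^(m0+1) := by positivity
          rw [mul_inv]
          rw [mul_assoc, mul_assoc, inv_mul_cancel₀ (ne_of_gt h3), mul_one]
          have h4 : (0:ℝ) ≤ ((3:ℝ)^(k+2))⁻¹ := by positivity
          nlinarith
      _ ≤ 1/6 := geo_sum_le _
  have := rho3_int_add (I : ℤ) ((bits m0 : ℝ)/3 + T)
  push_cast at this ⊢
  rw [this]
  have hbb : bits m0 ≤ 1 := hb m0
  interval_cases h : bits m0
  · simp only [Nat.cast_zero]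
    rw [show (0:ℝ)/3 + T = T by ring]
    rw [rho3_eq_zero hTnn hTle]
  · simp only [Nat.cast_one]
    rw [rho3_eq_one (by linarith) (by linarith)]
lemma contProj (d : ℕ) (i : Fin d) : Continuous (fun x : EuclideanSpace ℝ (Fin d) => x i) :=
  (EuclideanSpace.proj i).continuous

lemma cube_closed (d : ℕ) : IsClosed (unitCube d) := by
  have : unitCube d = ⋂ i, (fun x : EuclideanSpace ℝ (Fin d) => x i) ⁻¹' Set.Icc 0 1 := by
    ext x; simp [unitCube, Set.mem_iInter]
  rw [this]
  exact isClosed_iInter fun i => isClosed_Icc.preimage (contProj d i)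

lemma cube_zero_mem (d : ℕ) : (0 : EuclideanSpace ℝ (Fin d)) ∈ unitCube d := by
  intro i; simp

lemma dist_le_sqrt {d : ℕ} {x y : EuclideanSpace ℝ (Fin d)} {r : ℝ} (hr : 0 ≤ r)
    (h : ∀ i, |x i - y i| ≤ r) : ‖x - y‖ ≤ Real.sqrt d * r := by
  rw [EuclideanSpace.norm_eq]
  have h1 : ∀ i, ‖(x - y) i‖ ^ 2 ≤ r ^ 2 := by
    intro i
    have : (x - y) i = x i - y i := rfl
    rw [this, Real.norm_eq_abs]
    have := h i
    nlinarith [abs_nonneg (x i - y i)]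
  calc Real.sqrt (∑ i, ‖(x - y) i‖ ^ 2) ≤ Real.sqrt (∑ _i : Fin d, r ^ 2) :=
        Real.sqrt_le_sqrt (Finset.sum_le_sum fun i _ => h1 i)
    _ = Real.sqrt (d * r ^ 2) := by rw [Finset.sum_const]; simp [mul_comm]
    _ = Real.sqrt d * r := by
        rw [Real.sqrt_mul (Nat.cast_nonneg d), Real.sqrt_sq hr]

lemma cube_norm_sub_le {d : ℕ} {x y : EuclideanSpace ℝ (Fin d)}
    (hx : x ∈ unitCube d) (hy : y ∈ unitCube d) : ‖x - y‖ ≤ Real.sqrt d := by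
  have := dist_le_sqrt (x := x) (y := y) (r := 1) zero_le_one (fun i => by
    have h1 := hx i; have h2 := hy i
    simp only [Set.mem_Icc] at h1 h2
    rw [abs_le]; constructor <;> linarith)
  rw [mul_one] at this
  exact this

lemma cube_compact (d : ℕ) : IsCompact (unitCube d) := by
  rw [Metric.isCompact_iff_isClosed_bounded]
  refine ⟨cube_closed d, ?_⟩
  apply Bornology.IsBounded.subset (Metric.isBounded_closedBall (x := (0 : EuclideanSpace ℝ (Fin d))) (r := Real.sqrt d))
  intro x hx
  simp only [Metric.mem_closedBall, dist_eq_norm]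
  have := cube_norm_sub_le hx (cube_zero_mem d)
  simpa using this

lemma modCont_bddAbove (d : ℕ) (f : EuclideanSpace ℝ (Fin d) → ℝ)
    (hf : ContinuousOn f (unitCube d)) (r : ℝ) :
    BddAbove {t | ∃ x ∈ unitCube d, ∃ y ∈ unitCube d, ‖x - y‖ ≤ r ∧ t = |f x - f y|} := by
  obtain ⟨C, hC⟩ := (cube_compact d).exists_bound_of_continuousOn hf
  refine ⟨2 * C, ?_⟩
  rintro t ⟨x, hx, y, hy, -, rfl⟩
  have h1 := hC x hx
  have h2 := hC y hy
  rw [Real.norm_eq_abs] at h1 h2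
  calc |f x - f y| ≤ |f x| + |f y| := abs_sub _ _
    _ ≤ 2 * C := by linarith

lemma modCont_le {d : ℕ} {f : EuclideanSpace ℝ (Fin d) → ℝ}
    (hf : ContinuousOn f (unitCube d)) {x y : EuclideanSpace ℝ (Fin d)} {r : ℝ}
    (hx : x ∈ unitCube d) (hy : y ∈ unitCube d) (h : ‖x - y‖ ≤ r) :
    |f x - f y| ≤ modCont d f r :=
  le_csSup (modCont_bddAbove d f hf r) ⟨x, hx, y, hy, h, rfl⟩

lemma modCont_nonneg {d : ℕ} {f : EuclideanSpace ℝ (Fin d) → ℝ}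
    (hf : ContinuousOn f (unitCube d)) {r : ℝ} (hr : 0 ≤ r) :
    0 ≤ modCont d f r := by
  have := modCont_le hf (cube_zero_mem d) (cube_zero_mem d) (by simpa using hr)
  simpa using le_trans (abs_nonneg _) this
lemma cube_measurable (d : ℕ) : MeasurableSet (unitCube d) := (cube_closed d).measurableSet

lemma cube_preimage (d : ℕ) :
    unitCube d = (MeasurableEquiv.toLp 2 (Fin d → ℝ)).symm ⁻¹' (Set.univ.pi fun _ => Set.Icc (0:ℝ) 1) := by
  ext x
  simp only [Set.mem_preimage, Set.mem_univ_pi]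
  exact Iff.rfl

lemma cube_volume (d : ℕ) : volume (unitCube d) = 1 := by
  rw [cube_preimage d,
    (EuclideanSpace.volume_preserving_symm_measurableEquiv_toLp (Fin d)).measure_preimage
      ((MeasurableSet.univ_pi fun _ => measurableSet_Icc).nullMeasurableSet),
    volume_pi_pi]
  simp [Real.volume_Icc]

/-- per-coordinate slab volume -/
lemma slab_volume (d : ℕ) (i : Fin d) (S : Set ℝ) (hS : MeasurableSet S) :
    volume ({x : EuclideanSpace ℝ (Fin d) | x i ∈ S} ∩ unitCube d)
      ≤ volume (S ∩ Set.Icc (0:ℝ) 1) := by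
  have hsub : {x : EuclideanSpace ℝ (Fin d) | x i ∈ S} ∩ unitCube d
      ⊆ (MeasurableEquiv.toLp 2 (Fin d → ℝ)).symm ⁻¹'
        (Set.univ.pi fun j => if j = i then S ∩ Set.Icc (0:ℝ) 1 else Set.Icc (0:ℝ) 1) := by
    rintro x ⟨hxS, hxc⟩
    simp only [Set.mem_preimage, Set.mem_pi, Set.mem_univ, forall_true_left]
    intro j
    by_cases hj : j = i
    · subst hj; simp only [if_pos rfl]; exact ⟨hxS, hxc j⟩
    · simp only [if_neg hj]; exact hxc j
  calc volume ({x : EuclideanSpace ℝ (Fin d) | x i ∈ S} ∩ unitCube d)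
      ≤ volume ((MeasurableEquiv.toLp 2 (Fin d → ℝ)).symm ⁻¹'
        (Set.univ.pi fun j => if j = i then S ∩ Set.Icc (0:ℝ) 1 else Set.Icc (0:ℝ) 1)) :=
        measure_mono hsub
    _ = volume (Set.univ.pi fun j => if j = i then S ∩ Set.Icc (0:ℝ) 1 else Set.Icc (0:ℝ) 1) := by
        apply (EuclideanSpace.volume_preserving_symm_measurableEquiv_toLp (Fin d)).measure_preimage
        apply MeasurableSet.nullMeasurableSet
        apply MeasurableSet.univ_pi
        intro j
        by_cases hj : j = i <;> simp [hj, hS.inter measurableSet_Icc, measurableSet_Icc]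
    _ ≤ volume (S ∩ Set.Icc (0:ℝ) 1) := by
        rw [volume_pi_pi]
        calc ∏ j : Fin d, volume (if j = i then S ∩ Set.Icc (0:ℝ) 1 else Set.Icc (0:ℝ) 1)
            ≤ ∏ j : Fin d, (if j = i then volume (S ∩ Set.Icc (0:ℝ) 1) else 1) := by
              apply Finset.prod_le_prod' 
              intro j _
              by_cases hj : j = i
              · simp [hj]
              · simp [hj, Real.volume_Icc]
          _ = volume (S ∩ Set.Icc (0:ℝ) 1) := by
              rw [Finset.prod_ite_eq' Finset.univ i (fun _ => volume (S ∩ Set.Icc (0:ℝ) 1))]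
              simp

/-- the bad set for one coordinate -/
def badT (N : ℕ) (δ : ℝ) : Set ℝ := {t | 1 - δ < Int.fract ((2:ℝ)^N * t)} ∪ {1}

lemma badT_measurable (N : ℕ) (δ : ℝ) : MeasurableSet (badT N δ) := by
  apply MeasurableSet.union
  · exact measurableSet_lt measurable_const
      (measurable_fract.comp (measurable_const.mul measurable_id))
  · exact measurableSet_singleton 1

lemma badT_volume (N : ℕ) (δ : ℝ) (hδ0 : 0 < δ) (hδ1 : δ < 1) :
    volume (badT N δ ∩ Set.Icc (0:ℝ) 1) ≤ ENNReal.ofReal δ := by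
  have h2N : (0:ℝ) < 2 ^ N := by positivity
  have hsub : badT N δ ∩ Set.Icc (0:ℝ) 1 ⊆
      (⋃ k ∈ Finset.range (2^N), Set.Ioo (((k:ℝ) + 1 - δ)/2^N) (((k:ℝ)+1)/2^N)) ∪ {1} := by
    rintro t ⟨htb, ht0, ht1⟩
    rcases htb with htb | htb
    · simp only [Set.mem_setOf_eq] at htb
      by_cases h1 : t = 1
      · right; simp [h1]
      left
      have ht1' : t < 1 := lt_of_le_of_ne ht1 h1
      set s := (2:ℝ)^N * t with hs
      have hs0 : 0 ≤ s := by positivity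
      have hslt : s < 2^N := by
        rw [hs]; nlinarith
      have hk0 : 0 ≤ ⌊s⌋ := Int.floor_nonneg.mpr hs0
      have hklt : ⌊s⌋ < ((2^N : ℕ) : ℤ) := by
        have : (⌊s⌋ : ℝ) ≤ s := Int.floor_le s
        have h2 : (⌊s⌋:ℝ) < (2:ℝ)^N := lt_of_le_of_lt this hslt
        exact_mod_cast (by push_cast at h2 ⊢; linarith : (⌊s⌋:ℝ) < ((2^N : ℕ) : ℝ))
      set k := ⌊s⌋.toNat with hkdef
      have hkc : (k : ℝ) = (⌊s⌋ : ℝ) := by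
        rw [hkdef]; exact_mod_cast congrArg Int.cast (Int.toNat_of_nonneg hk0)
      have hkmem : k ∈ Finset.range (2^N) := by
        simp only [Finset.mem_range]
        omega
      refine Set.mem_biUnion hkmem ?_
      have hfr : Int.fract s = s - ⌊s⌋ := (Int.self_sub_floor s).symm
      have hfrlt : Int.fract s < 1 := Int.fract_lt_one s
      constructor
      · rw [div_lt_iff₀ h2N]
        rw [hkc]
        have : 1 - δ < s - ⌊s⌋ := by rw [← hfr]; exact htb
        rw [hs] at this
        nlinarith [mul_comm ((2:ℝ)^N) t]
      · rw [lt_div_iff₀ h2N]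
        rw [hkc]
        have : s - ⌊s⌋ < 1 := by rw [← hfr]; exact hfrlt
        rw [hs] at this
        nlinarith [mul_comm ((2:ℝ)^N) t]
    · right; exact htb
  calc volume (badT N δ ∩ Set.Icc (0:ℝ) 1)
      ≤ volume ((⋃ k ∈ Finset.range (2^N), Set.Ioo (((k:ℝ) + 1 - δ)/2^N) (((k:ℝ)+1)/2^N))) + volume ({(1:ℝ)}) :=
        le_trans (measure_mono hsub) (measure_union_le _ _)
    _ = volume ((⋃ k ∈ Finset.range (2^N), Set.Ioo (((k:ℝ) + 1 - δ)/2^N) (((k:ℝ)+1)/2^N))) := by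
        simp
    _ ≤ ∑ k ∈ Finset.range (2^N), volume (Set.Ioo (((k:ℝ) + 1 - δ)/2^N) (((k:ℝ)+1)/2^N)) :=
        measure_biUnion_finset_le _ _
    _ ≤ ENNReal.ofReal δ := by
        have hvol : ∀ k : ℕ, volume (Set.Ioo (((k:ℝ) + 1 - δ)/2^N) (((k:ℝ)+1)/2^N))
            = ENNReal.ofReal (δ / 2^N) := by
          intro k
          rw [Real.volume_Ioo]
          congr 1
          field_simp
          ring
        simp only [hvol, Finset.sum_const, Finset.card_range, nsmul_eq_mul]
        rw [← ENNReal.ofReal_natCast (2^N), ← ENNReal.ofReal_mul (by positivity)]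
        apply ENNReal.ofReal_le_ofReal
        push_cast
        rw [mul_div_cancel₀]
        positivity
-- Part B: the construction and pointwise bounds

def decv (N m i : ℕ) : ℕ := m / 2^(N*i) % 2^N

noncomputable def cptv (d N m : ℕ) : EuclideanSpace ℝ (Fin d) :=
  WithLp.toLp 2 (fun i : Fin d => (decv N m (i:ℕ) : ℝ) / 2^N)

noncomputable def nmv (d N : ℕ) (f : EuclideanSpace ℝ (Fin d) → ℝ) (m : ℕ) : ℕ :=
  if modCont d f (Real.sqrt d) = 0 then 0
  else min (⌊(2:ℝ)^N * ((f (cptv d N m) - f 0 + modCont d f (Real.sqrt d)) /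
      (2 * modCont d f (Real.sqrt d)))⌋.toNat) (2^N - 1)

noncomputable def coef (d N : ℕ) (f : EuclideanSpace ℝ (Fin d) → ℝ) (j : ℕ) : ℝ :=
  ∑ m ∈ Finset.range (2^(N*d)), ((nmv d N f m / 2^(N-j) % 2 : ℕ) : ℝ) * ((3:ℝ)^(m+2))⁻¹

noncomputable def phi (d N : ℕ) (f : EuclideanSpace ℝ (Fin d) → ℝ) (δ : ℝ) (a : ℕ → ℝ)
    (x : EuclideanSpace ℝ (Fin d)) : ℝ :=
  2 * modCont d f (Real.sqrt d) *
      ∑ j ∈ Finset.Icc 1 N, (2:ℝ) ^ (-(j:ℤ)) *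
        rho3 (a j * (3:ℝ) ^
          ((1 + ∑ i : Fin d, (2:ℝ) ^ ((i:ℕ) * N) * rho1 δ ((2:ℝ) ^ N * x i) : ℝ)))
    + f 0 - modCont d f (Real.sqrt d)

lemma nmv_lt (d N : ℕ) (f : EuclideanSpace ℝ (Fin d) → ℝ) (m : ℕ) : nmv d N f m < 2^N := by
  unfold nmv
  have h1 : 0 < 2^N := Nat.pow_pos (by norm_num)
  split_ifs
  · exact h1
  · have := min_le_right (⌊(2:ℝ)^N * ((f (cptv d N m) - f 0 + modCont d f (Real.sqrt d)) /
      (2 * modCont d f (Real.sqrt d)))⌋.toNat) (2^N - 1)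
    omega

lemma coef_nonneg (d N : ℕ) (f : EuclideanSpace ℝ (Fin d) → ℝ) (j : ℕ) : 0 ≤ coef d N f j :=
  bit_a_nonneg _ _

lemma coef_le (d N : ℕ) (f : EuclideanSpace ℝ (Fin d) → ℝ) (j : ℕ) : coef d N f j ≤ 1/6 :=
  bit_a_le _ _ (fun m => Nat.lt_succ_iff.mp (Nat.mod_lt _ (by norm_num)))

lemma coef_mem (d N : ℕ) (f : EuclideanSpace ℝ (Fin d) → ℝ) (j : ℕ) :
    coef d N f j ∈ Set.Ico (0:ℝ) (2/9) :=
  ⟨coef_nonneg d N f j, lt_of_le_of_lt (coef_le d N f j) (by norm_num)⟩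

lemma cptv_mem (d N m : ℕ) : cptv d N m ∈ unitCube d := by
  intro i
  show ((decv N m (i:ℕ) : ℝ) / 2^N : ℝ) ∈ Set.Icc (0:ℝ) 1
  have h1 : decv N m (i:ℕ) < 2^N := Nat.mod_lt _ (Nat.pow_pos (by norm_num))
  have h2 : (0:ℝ) < 2^N := by positivity
  constructor
  · apply div_nonneg (Nat.cast_nonneg _) h2.le
  · rw [div_le_one h2]
    have : ((decv N m (i:ℕ)):ℝ) < ((2^N : ℕ) : ℝ) := by exact_mod_cast h1
    push_cast at this
    linarith

/-- the nat-level binary expansion, reindexed over `Icc 1 N`. -/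
lemma bits_sum_Icc (N n : ℕ) (hn : n < 2^N) :
    ∑ j ∈ Finset.Icc 1 N, n / 2^(N-j) % 2 * 2^(N-j) = n := by
  have h1 : Finset.Icc 1 N = Finset.Ico 1 (N+1) := rfl
  rw [h1, Finset.sum_Ico_eq_sum_range]
  have h2 : ∀ i ∈ Finset.range N, n / 2^(N-(1+i)) % 2 * 2^(N-(1+i))
      = (fun i => n / 2^i % 2 * 2^i) (N-1-i) := by
    intro i hi
    simp only [Finset.mem_range] at hi
    have : N - (1+i) = N - 1 - i := by omega
    rw [this]
  rw [show N + 1 - 1 = N by omega, Finset.sum_congr rfl h2]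
  exact (Finset.sum_range_reflect (fun i => n / 2^i % 2 * 2^i) N).trans (bits_sum N n hn)

lemma sum_bits_real (N n : ℕ) (hN : 0 < N) (hn : n < 2^N) :
    ∑ j ∈ Finset.Icc 1 N, (2:ℝ)^(-(j:ℤ)) * ((n / 2^(N-j) % 2 : ℕ) : ℝ) = (n:ℝ) / 2^N := by
  have h2N : (0:ℝ) < 2^N := by positivity
  have key : ∀ j ∈ Finset.Icc 1 N, (2:ℝ)^(-(j:ℤ)) * ((n / 2^(N-j) % 2 : ℕ) : ℝ)
      = ((n / 2^(N-j) % 2 * 2^(N-j) : ℕ) : ℝ) / 2^N := by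
    intro j hj
    simp only [Finset.mem_Icc] at hj
    have hNj : (2:ℝ)^(N-j) * 2^j = 2^N := by
      rw [← pow_add]; congr 1; omega
    have h2j : (0:ℝ) < 2^j := by positivity
    rw [zpow_neg, zpow_natCast]
    push_cast
    rw [eq_div_iff (ne_of_gt h2N), ← hNj]
    have h2j' : (2:ℝ)^j ≠ 0 := ne_of_gt h2j
    field_simp
  rw [Finset.sum_congr rfl key, ← Finset.sum_div]
  congr 1
  rw [← Nat.cast_sum]
  exact_mod_cast congrArg (Nat.cast : ℕ → ℝ) (bits_sum_Icc N n hn)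

lemma twopow_Icc_sum (N : ℕ) : ∑ j ∈ Finset.Icc 1 N, (2:ℝ)^(-(j:ℤ)) = 1 - ((2:ℝ)⁻¹)^N := by
  induction N with
  | zero => simp
  | succ N ih =>
    rw [Finset.sum_Icc_succ_top (by omega), ih]
    have : (2:ℝ)^(-((N+1:ℕ):ℤ)) = ((2:ℝ)⁻¹)^(N+1) := by
      rw [zpow_neg, zpow_natCast, inv_pow]
    push_cast at this ⊢
    rw [this, pow_succ]
    ring

lemma nmv_approx (d N : ℕ) (f : EuclideanSpace ℝ (Fin d) → ℝ)
    (hf : ContinuousOn f (unitCube d)) (m : ℕ) :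
    |2 * modCont d f (Real.sqrt d) * ((nmv d N f m : ℝ) / 2^N) + f 0 - modCont d f (Real.sqrt d)
      - f (cptv d N m)| ≤ 2 * modCont d f (Real.sqrt d) * ((2:ℝ)^N)⁻¹ := by
  set ω := modCont d f (Real.sqrt d) with hω
  have hωnn : 0 ≤ ω := modCont_nonneg hf (Real.sqrt_nonneg _)
  have hfc : |f (cptv d N m) - f 0| ≤ ω :=
    modCont_le hf (cptv_mem d N m) (cube_zero_mem d) (cube_norm_sub_le (cptv_mem d N m) (cube_zero_mem d))
  have h2N : (0:ℝ) < 2^N := by positivity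
  unfold nmv
  rw [← hω]
  split_ifs with h0
  · rw [h0] at hfc ⊢
    simp only [Nat.cast_zero]
    rw [abs_sub_comm]
    have : |f (cptv d N m) - (2 * 0 * ((0:ℝ)/2^N) + f 0 - 0)| = |f (cptv d N m) - f 0| := by
      congr 1; ring
    rw [this]
    simpa using hfc
  · have hωpos : 0 < ω := lt_of_le_of_ne hωnn (Ne.symm h0)
    set t := (f (cptv d N m) - f 0 + ω) / (2 * ω) with ht
    have ht0 : 0 ≤ t := by
      apply div_nonneg _ (by linarith)
      cases' abs_le.mp hfc with h1 h2
      linarith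
    have ht1 : t ≤ 1 := by
      rw [ht, div_le_one (by linarith)]
      cases' abs_le.mp hfc with h1 h2
      linarith
    have hfc_eq : f (cptv d N m) = 2 * ω * t + f 0 - ω := by
      rw [ht]; field_simp; ring
    have habs : ∀ n : ℕ, |((n:ℝ))/2^N - t| ≤ ((2:ℝ)^N)⁻¹ →
        |2 * ω * ((n:ℝ)/2^N) + f 0 - ω - f (cptv d N m)| ≤ 2 * ω * ((2:ℝ)^N)⁻¹ := by
      intro n hn
      rw [hfc_eq]
      have : 2 * ω * ((n:ℝ)/2^N) + f 0 - ω - (2 * ω * t + f 0 - ω) = 2 * ω * ((n:ℝ)/2^N - t) := by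
        ring
      rw [this, abs_mul, abs_of_nonneg (by linarith : (0:ℝ) ≤ 2 * ω)]
      apply mul_le_mul_of_nonneg_left hn (by linarith)
    apply habs
    -- now the floor estimate
    set s := (2:ℝ)^N * t with hs
    have hs0 : 0 ≤ s := by positivity
    have hfl0 : 0 ≤ ⌊s⌋ := Int.floor_nonneg.mpr hs0
    have hfl1 : (⌊s⌋ : ℝ) ≤ s := Int.floor_le s
    have hfl2 : s < ⌊s⌋ + 1 := Int.lt_floor_add_one s
    by_cases hcase : ⌊s⌋.toNat ≤ 2^N - 1
    · rw [min_eq_left hcase]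
      have hc : ((⌊s⌋.toNat : ℕ) : ℝ) = (⌊s⌋ : ℝ) := by exact_mod_cast Int.toNat_of_nonneg hfl0
      rw [hc]
      refine abs_le.mpr ⟨?_, ?_⟩
      · have hA : t ≤ ((⌊s⌋:ℝ) + 1)/2^N := by
          rw [le_div_iff₀ h2N]
          rw [hs] at hfl2
          nlinarith
        have hB : ((⌊s⌋:ℝ) + 1)/2^N = (⌊s⌋:ℝ)/2^N + ((2:ℝ)^N)⁻¹ := by field_simp
        linarith
      · have hA : (⌊s⌋:ℝ)/2^N ≤ t := by
          rw [div_le_iff₀ h2N]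
          rw [hs] at hfl1
          linarith
        have hB : (0:ℝ) ≤ ((2:ℝ)^N)⁻¹ := by positivity
        linarith
    · rw [min_eq_right (by omega)]
      have h2N1 : (1:ℕ) ≤ 2^N := Nat.one_le_two_pow
      have hcast : (((2:ℕ)^N - 1 : ℕ) : ℝ) = 2^N - 1 := by
        push_cast [Nat.cast_sub h2N1]
        ring
      have hge : ((2^N : ℕ) : ℤ) ≤ ⌊s⌋ := by omega
      have hsge : (2:ℝ)^N ≤ s := by
        calc (2:ℝ)^N = (((2^N : ℕ) : ℤ) : ℝ) := by push_cast; ring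
          _ ≤ (⌊s⌋ : ℝ) := by exact_mod_cast hge
          _ ≤ s := hfl1
      have hteq : t = 1 := by
        have h2 : (2:ℝ)^N * t ≤ 2^N * 1 := by rw [mul_one]; nlinarith
        have h1 : t ≤ 1 := ht1
        rw [hs] at hsge
        nlinarith
      have hval : ((2:ℝ)^N - 1)/2^N - 1 = -((2:ℝ)^N)⁻¹ := by field_simp; ring
      rw [hcast, hteq, hval, abs_neg, abs_of_nonneg (by positivity)]

lemma rho1_eq_floor {δ t : ℝ} (h : Int.fract t ≤ 1 - δ) : rho1 δ t = (⌊t⌋ : ℝ) := by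
  unfold rho1
  rw [if_pos h]

lemma bad_bound (d N : ℕ) (f : EuclideanSpace ℝ (Fin d) → ℝ)
    (hf : ContinuousOn f (unitCube d)) (δ : ℝ) (a : ℕ → ℝ)
    (x : EuclideanSpace ℝ (Fin d)) (hx : x ∈ unitCube d) :
    |phi d N f δ a x - f x| ≤ 2 * (|f 0| + modCont d f (Real.sqrt d)) := by
  set ω := modCont d f (Real.sqrt d) with hω
  have hωnn : 0 ≤ ω := modCont_nonneg hf (Real.sqrt_nonneg _)
  have hfx : |f x - f 0| ≤ ω :=
    modCont_le hf hx (cube_zero_mem d) (cube_norm_sub_le hx (cube_zero_mem d))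
  set S := ∑ j ∈ Finset.Icc 1 N, (2:ℝ) ^ (-(j:ℤ)) *
        rho3 (a j * (3:ℝ) ^
          ((1 + ∑ i : Fin d, (2:ℝ) ^ ((i:ℕ) * N) * rho1 δ ((2:ℝ) ^ N * x i) : ℝ))) with hS
  have hS0 : 0 ≤ S := Finset.sum_nonneg fun j _ => by
    have h1 := (rho3_mem (a j * (3:ℝ) ^ ((1 + ∑ i : Fin d, (2:ℝ) ^ ((i:ℕ) * N) * rho1 δ ((2:ℝ) ^ N * x i) : ℝ)))).1
    have h2 : (0:ℝ) < (2:ℝ)^(-(j:ℤ)) := by positivity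
    positivity
  have hS1 : S ≤ 1 := by
    calc S ≤ ∑ j ∈ Finset.Icc 1 N, (2:ℝ) ^ (-(j:ℤ)) := by
          apply Finset.sum_le_sum
          intro j _
          have h1 := (rho3_mem (a j * (3:ℝ) ^ ((1 + ∑ i : Fin d, (2:ℝ) ^ ((i:ℕ) * N) * rho1 δ ((2:ℝ) ^ N * x i) : ℝ)))).2
          have h2 : (0:ℝ) < (2:ℝ)^(-(j:ℤ)) := by positivity
          nlinarith
      _ = 1 - ((2:ℝ)⁻¹)^N := twopow_Icc_sum N
      _ ≤ 1 := by
          have : (0:ℝ) ≤ ((2:ℝ)⁻¹)^N := by positivity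
          linarith
  have hphi : phi d N f δ a x = 2 * ω * S + f 0 - ω := rfl
  rw [hphi]
  have h1 : |2 * ω * S - ω| ≤ ω := by
    rw [abs_le]
    constructor <;> nlinarith
  have h2 : 2 * ω * S + f 0 - ω - f x = (2 * ω * S - ω) - (f x - f 0) := by ring
  rw [h2]
  have h3 := abs_sub (2 * ω * S - ω) (f x - f 0)
  have h4 : (0:ℝ) ≤ |f 0| := abs_nonneg _
  linarith

lemma good_bound (d N : ℕ) (hd : 0 < d) (hN : 0 < N)
    (f : EuclideanSpace ℝ (Fin d) → ℝ) (hf : ContinuousOn f (unitCube d))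
    (δ : ℝ) (hδ : δ ∈ Set.Ioo (0:ℝ) 1)
    (x : EuclideanSpace ℝ (Fin d)) (hx : x ∈ unitCube d)
    (hgood : ∀ i, x i ≠ 1 ∧ Int.fract ((2:ℝ)^N * x i) ≤ 1 - δ) :
    |phi d N f δ (coef d N f) x - f x|
      ≤ 2 * modCont d f (Real.sqrt d) * (2:ℝ)^(-(N:ℤ))
        + modCont d f (Real.sqrt d * (2:ℝ)^(-(N:ℤ))) := by
  set ω := modCont d f (Real.sqrt d) with hω
  have hωnn : 0 ≤ ω := modCont_nonneg hf (Real.sqrt_nonneg _)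
  have h2N : (0:ℝ) < 2^N := by positivity
  -- the digits of x
  set k : ℕ → ℕ := fun i => if h : i < d then ⌊(2:ℝ)^N * x ⟨i, h⟩⌋.toNat else 0 with hk
  have hxi : ∀ i : Fin d, 0 ≤ x i ∧ x i < 1 := by
    intro i
    have h1 := hx i
    have h2 := (hgood i).1
    exact ⟨h1.1, lt_of_le_of_ne h1.2 h2⟩
  have hflnn : ∀ i : Fin d, 0 ≤ ⌊(2:ℝ)^N * x i⌋ := by
    intro i
    apply Int.floor_nonneg.mpr
    have := (hxi i).1
    positivity
  have hkval : ∀ (i : ℕ) (h : i < d), (k i : ℝ) = (⌊(2:ℝ)^N * x ⟨i, h⟩⌋ : ℝ) := by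
    intro i h
    rw [hk]
    simp only [dif_pos h]
    exact_mod_cast Int.toNat_of_nonneg (hflnn ⟨i, h⟩)
  have hklt : ∀ i, i < d → k i < 2^N := by
    intro i h
    have h1 : ((2:ℝ)^N) * x ⟨i, h⟩ < 2^N := by
      have := (hxi ⟨i, h⟩).2
      nlinarith [(hxi ⟨i,h⟩).1]
    have h2 : (⌊(2:ℝ)^N * x ⟨i, h⟩⌋ : ℝ) < 2^N := lt_of_le_of_lt (Int.floor_le _) h1
    have h3 : (k i : ℝ) < ((2^N : ℕ) : ℝ) := by
      rw [hkval i h]; push_cast; linarith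
    exact_mod_cast h3
  set m : ℕ := ∑ i ∈ Finset.range d, k i * (2^N)^i with hm
  have hmlt : m < 2^(N*d) := by
    have := sum_lt_pow (2^N) Nat.one_le_two_pow k d hklt
    rwa [← pow_mul] at this
  have hdec : ∀ i : Fin d, decv N m (i:ℕ) = k (i:ℕ) := by
    intro i
    unfold decv
    rw [pow_mul]
    exact digit_decode (2^N) Nat.one_le_two_pow k d hklt (i:ℕ) i.isLt
  -- the exponent evaluates to m + 1
  have hE : (1 + ∑ i : Fin d, (2:ℝ) ^ ((i:ℕ) * N) * rho1 δ ((2:ℝ) ^ N * x i) : ℝ)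
      = ((m + 1 : ℕ) : ℝ) := by
    have hterm : ∀ i : Fin d, (2:ℝ) ^ ((i:ℕ) * N) * rho1 δ ((2:ℝ) ^ N * x i)
        = (fun i : ℕ => ((k i * (2^N)^i : ℕ) : ℝ)) (i:ℕ) := by
      intro i
      rw [rho1_eq_floor (hgood i).2]
      have h1 : (⌊(2:ℝ)^N * x i⌋ : ℝ) = (k (i:ℕ) : ℝ) := by
        rw [hkval (i:ℕ) i.isLt]
      push_cast
      rw [h1]
      rw [show ((i:ℕ) * N) = N * (i:ℕ) by ring, pow_mul]
      ring
    rw [Finset.sum_congr rfl (fun i _ => hterm i),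
      Fin.sum_univ_eq_sum_range (fun i => ((k i * (2^N)^i : ℕ) : ℝ)) d]
    push_cast [hm]
    ring
  have hrpow : (3:ℝ) ^ ((1 + ∑ i : Fin d, (2:ℝ) ^ ((i:ℕ) * N) * rho1 δ ((2:ℝ) ^ N * x i) : ℝ))
      = (3:ℝ) ^ (m + 1) := by
    rw [hE, Real.rpow_natCast]
  -- evaluate the sum
  have hsum : ∑ j ∈ Finset.Icc 1 N, (2:ℝ) ^ (-(j:ℤ)) *
        rho3 (coef d N f j * (3:ℝ) ^
          ((1 + ∑ i : Fin d, (2:ℝ) ^ ((i:ℕ) * N) * rho1 δ ((2:ℝ) ^ N * x i) : ℝ)))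
      = (nmv d N f m : ℝ) / 2^N := by
    have hterm : ∀ j ∈ Finset.Icc 1 N, (2:ℝ) ^ (-(j:ℤ)) *
        rho3 (coef d N f j * (3:ℝ) ^
          ((1 + ∑ i : Fin d, (2:ℝ) ^ ((i:ℕ) * N) * rho1 δ ((2:ℝ) ^ N * x i) : ℝ)))
        = (2:ℝ) ^ (-(j:ℤ)) * ((nmv d N f m / 2^(N-j) % 2 : ℕ) : ℝ) := by
      intro j _
      rw [hrpow]
      congr 1
      exact bitextract (2^(N*d)) (fun m' => nmv d N f m' / 2^(N-j) % 2)
        (fun m' => Nat.lt_succ_iff.mp (Nat.mod_lt _ (by norm_num))) m hmlt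
    rw [Finset.sum_congr rfl hterm]
    exact sum_bits_real N (nmv d N f m) hN (nmv_lt d N f m)
  have hphi : phi d N f δ (coef d N f) x = 2 * ω * ((nmv d N f m : ℝ) / 2^N) + f 0 - ω := by
    unfold phi
    rw [hsum, ← hω]
  -- distance from x to the grid point
  have hcdist : ‖x - cptv d N m‖ ≤ Real.sqrt d * ((2:ℝ)^N)⁻¹ := by
    apply dist_le_sqrt (by positivity)
    intro i
    have hc : cptv d N m i = (k (i:ℕ) : ℝ) / 2^N := by
      show ((decv N m (i:ℕ) : ℝ) / 2^N : ℝ) = _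
      rw [hdec i]
    rw [hc, hkval (i:ℕ) i.isLt]
    have hi : (⟨(i:ℕ), i.isLt⟩ : Fin d) = i := rfl
    rw [hi]
    have hfl1 : (⌊(2:ℝ)^N * x i⌋ : ℝ) ≤ (2:ℝ)^N * x i := Int.floor_le _
    have hfl2 : (2:ℝ)^N * x i < (⌊(2:ℝ)^N * x i⌋ : ℝ) + 1 := Int.lt_floor_add_one _
    have hA : (⌊(2:ℝ)^N * x i⌋ : ℝ) / 2^N ≤ x i := by
      rw [div_le_iff₀ h2N]; nlinarith
    have hB : x i ≤ (⌊(2:ℝ)^N * x i⌋ : ℝ) / 2^N + ((2:ℝ)^N)⁻¹ := by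
      have hsplit : (⌊(2:ℝ)^N * x i⌋ : ℝ)/2^N + ((2:ℝ)^N)⁻¹ = ((⌊(2:ℝ)^N * x i⌋ : ℝ) + 1)/2^N := by
        field_simp
      rw [hsplit, le_div_iff₀ h2N]; nlinarith
    have hC : (0:ℝ) ≤ ((2:ℝ)^N)⁻¹ := by positivity
    rw [abs_le]
    exact ⟨by linarith, by linarith⟩
  -- put it together
  have happrox := nmv_approx d N f hf m
  rw [← hω] at happrox
  have hfc : |f (cptv d N m) - f x| ≤ modCont d f (Real.sqrt d * (2:ℝ)^(-(N:ℤ))) := by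
    apply modCont_le hf (cptv_mem d N m) hx
    rw [show (2:ℝ)^(-(N:ℤ)) = ((2:ℝ)^N)⁻¹ by rw [zpow_neg, zpow_natCast]]
    rw [norm_sub_rev]
    exact hcdist
  rw [hphi]
  have hzp : (2:ℝ)^(-(N:ℤ)) = ((2:ℝ)^N)⁻¹ := by rw [zpow_neg, zpow_natCast]
  rw [hzp]
  calc |2 * ω * ((nmv d N f m : ℝ) / 2^N) + f 0 - ω - f x|
      ≤ |2 * ω * ((nmv d N f m : ℝ) / 2^N) + f 0 - ω - f (cptv d N m)|
        + |f (cptv d N m) - f x| := by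
        have : 2 * ω * ((nmv d N f m : ℝ) / 2^N) + f 0 - ω - f x
            = (2 * ω * ((nmv d N f m : ℝ) / 2^N) + f 0 - ω - f (cptv d N m))
              + (f (cptv d N m) - f x) := by ring
        rw [this]
        exact abs_add_le _ _
    _ ≤ 2 * ω * ((2:ℝ)^N)⁻¹ + modCont d f (Real.sqrt d * ((2:ℝ)^N)⁻¹) := by
        rw [hzp] at hfc
        exact add_le_add happrox hfc

lemma measurable_floor_real : Measurable (fun t : ℝ => (⌊t⌋ : ℝ)) :=
  Measurable.comp (f := fun t : ℝ => ⌊t⌋) (g := fun n : ℤ => (n : ℝ))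
    (fun _ _ => trivial) (measurable_id.floor)

lemma rho1_measurable (δ : ℝ) : Measurable (rho1 δ) := by
  unfold rho1
  apply Measurable.ite
  · exact measurableSet_le measurable_fract measurable_const
  · exact measurable_floor_real
  · exact measurable_floor_real.add
      ((measurable_fract.sub measurable_const).div measurable_const)

lemma Ttilde_measurable : Measurable Ttilde := by
  unfold Ttilde
  apply Measurable.ite
  · exact measurableSet_lt measurable_const measurable_id
  · exact measurable_const
  apply Measurable.ite
  · exact measurableSet_le measurable_const measurable_id
  · exact measurable_const.sub (measurable_id.div measurable_const)
  · exact measurable_const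

lemma rho3_measurable : Measurable rho3 :=
  Ttilde_measurable.comp
    (Real.continuous_cos.comp (continuous_const.mul continuous_id)).measurable

lemma rpow3_measurable : Measurable (fun y : ℝ => (3:ℝ) ^ y) := by
  have h : (fun y : ℝ => (3:ℝ) ^ y) = fun y => Real.exp (Real.log 3 * y) := by
    funext y
    exact Real.rpow_def_of_pos (by norm_num) y
  rw [h]
  exact (Real.continuous_exp.comp (continuous_const.mul continuous_id)).measurable

lemma phi_measurable (d N : ℕ) (f : EuclideanSpace ℝ (Fin d) → ℝ) (δ : ℝ) (a : ℕ → ℝ) :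
    Measurable (phi d N f δ a) := by
  unfold phi
  apply Measurable.sub _ measurable_const
  apply Measurable.add_const
  apply Measurable.const_mul
  apply Finset.measurable_sum
  intro j _
  apply Measurable.const_mul
  apply rho3_measurable.comp
  apply Measurable.const_mul
  apply rpow3_measurable.comp
  apply Measurable.add measurable_const
  apply Finset.measurable_sum
  intro i _
  exact ((rho1_measurable δ).comp
    (((contProj d i).measurable).const_mul ((2:ℝ)^N))).const_mul _

theorem stmt16 (d : ℕ) (hd : 0 < d) (f : EuclideanSpace ℝ (Fin d) → ℝ)
    (hf : ContinuousOn f (unitCube d)) (δ : ℝ) (hδ : δ ∈ Set.Ioo (0:ℝ) 1)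
    (N : ℕ) (hN : 0 < N) (p : ℝ) (hp : 1 ≤ p) :
    ∃ a : ℕ → ℝ, (∀ j, a j ∈ Set.Ico (0:ℝ) (2/9)) ∧
      (∫ x in unitCube d,
          |(2 * modCont d f (Real.sqrt d) *
              ∑ j ∈ Finset.Icc 1 N, (2:ℝ) ^ (-(j:ℤ)) *
                rho3 (a j * (3:ℝ) ^
                  ((1 + ∑ i : Fin d, (2:ℝ) ^ ((i:ℕ) * N) * rho1 δ ((2:ℝ) ^ N * x i) : ℝ)))
            + f 0 - modCont d f (Real.sqrt d)) - f x| ^ p)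
      ≤ (2 * modCont d f (Real.sqrt d) * (2:ℝ) ^ (-(N:ℤ))
            + modCont d f (Real.sqrt d * (2:ℝ) ^ (-(N:ℤ)))) ^ p
        + 2 ^ p * d * δ * (|f 0| + modCont d f (Real.sqrt d)) ^ p := by
  refine ⟨coef d N f, coef_mem d N f, ?_⟩
  have hp0 : (0:ℝ) ≤ p := le_trans zero_le_one hp
  set ω := modCont d f (Real.sqrt d) with hω
  have hωnn : 0 ≤ ω := modCont_nonneg hf (Real.sqrt_nonneg _)
  have hω'nn : 0 ≤ modCont d f (Real.sqrt d * (2:ℝ)^(-(N:ℤ))) :=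
    modCont_nonneg hf (by positivity)
  set g : EuclideanSpace ℝ (Fin d) → ℝ := fun x => |phi d N f δ (coef d N f) x - f x| ^ p
    with hg
  have hmain : (∫ x in unitCube d,
          |(2 * modCont d f (Real.sqrt d) *
              ∑ j ∈ Finset.Icc 1 N, (2:ℝ) ^ (-(j:ℤ)) *
                rho3 (coef d N f j * (3:ℝ) ^
                  ((1 + ∑ i : Fin d, (2:ℝ) ^ ((i:ℕ) * N) * rho1 δ ((2:ℝ) ^ N * x i) : ℝ)))
            + f 0 - modCont d f (Real.sqrt d)) - f x| ^ p)
      = ∫ x in unitCube d, g x := rfl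
  rw [hmain]
  -- constants
  set C1 : ℝ := (2 * ω * (2:ℝ)^(-(N:ℤ)) + modCont d f (Real.sqrt d * (2:ℝ)^(-(N:ℤ))))^p
    with hC1
  set C2 : ℝ := (2 * (|f 0| + ω))^p with hC2
  have hC1nn : 0 ≤ C1 := Real.rpow_nonneg (by positivity) p
  have hC2nn : 0 ≤ C2 := Real.rpow_nonneg (by positivity) p
  -- the bad set
  set U : Set (EuclideanSpace ℝ (Fin d)) := ⋃ i : Fin d, {x | x i ∈ badT N δ} with hU
  have hUm : MeasurableSet U := by
    apply MeasurableSet.iUnion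
    intro i
    exact (badT_measurable N δ).preimage (contProj d i).measurable
  set G : Set (EuclideanSpace ℝ (Fin d)) := unitCube d \ U with hG
  set B : Set (EuclideanSpace ℝ (Fin d)) := unitCube d ∩ U with hB
  have hGm : MeasurableSet G := (cube_measurable d).diff hUm
  have hBm : MeasurableSet B := (cube_measurable d).inter hUm
  have hsplit : unitCube d = G ∪ B := by
    ext x
    by_cases hxU : x ∈ U
    · simp [hG, hB, hxU]
    · simp [hG, hB, hxU]
  have hdisj : Disjoint G B := by
    rw [Set.disjoint_left]
    rintro x ⟨-, hxU⟩ ⟨-, hxU'⟩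
    exact hxU hxU'
  -- measurability of g
  have hgm : AEStronglyMeasurable g (volume.restrict (unitCube d)) := by
    have h1 : AEMeasurable (fun x => phi d N f δ (coef d N f) x - f x)
        (volume.restrict (unitCube d)) :=
      (phi_measurable d N f δ _).aemeasurable.sub (hf.aemeasurable (cube_measurable d))
    have h2 : Continuous (fun t : ℝ => |t| ^ p) :=
      (Real.continuous_rpow_const hp0).comp continuous_abs
    exact (h2.measurable.comp_aemeasurable h1).aestronglyMeasurable
  have hgmG : AEStronglyMeasurable g (volume.restrict G) :=
    hgm.mono_measure (Measure.restrict_mono (by rw [hsplit]; exact Set.subset_union_left) le_rfl)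
  have hgmB : AEStronglyMeasurable g (volume.restrict B) :=
    hgm.mono_measure (Measure.restrict_mono (by rw [hsplit]; exact Set.subset_union_right) le_rfl)
  -- volumes
  have hvolG : volume G ≤ 1 := by
    calc volume G ≤ volume (unitCube d) := measure_mono Set.diff_subset
      _ = 1 := cube_volume d
  have hvolB : volume B ≤ ENNReal.ofReal (d * δ) := by
    have hsub : B ⊆ ⋃ i : Fin d, ({x : EuclideanSpace ℝ (Fin d) | x i ∈ badT N δ} ∩ unitCube d) := by
      rintro x ⟨hxc, hxU⟩
      rw [Set.mem_iUnion] at hxU ⊢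
      obtain ⟨i, hi⟩ := hxU
      exact ⟨i, hi, hxc⟩
    calc volume B ≤ volume (⋃ i : Fin d, ({x : EuclideanSpace ℝ (Fin d) | x i ∈ badT N δ} ∩ unitCube d)) :=
          measure_mono hsub
      _ ≤ ∑ i : Fin d, volume ({x : EuclideanSpace ℝ (Fin d) | x i ∈ badT N δ} ∩ unitCube d) := by
          exact measure_iUnion_fintype_le _ _
      _ ≤ ∑ _i : Fin d, ENNReal.ofReal δ := by
          apply Finset.sum_le_sum
          intro i _
          exact le_trans (slab_volume d i _ (badT_measurable N δ))
            (badT_volume N δ hδ.1 hδ.2)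
      _ = ENNReal.ofReal (d * δ) := by
          rw [Finset.sum_const, Finset.card_univ, Fintype.card_fin, nsmul_eq_mul,
            ENNReal.ofReal_mul (Nat.cast_nonneg d), ENNReal.ofReal_natCast]
  have hvolGfin : volume G < ⊤ := lt_of_le_of_lt hvolG (by norm_num)
  have hvolBfin : volume B < ⊤ :=
    lt_of_le_of_lt hvolB (by exact ENNReal.ofReal_lt_top)
  -- pointwise bounds
  have hgood_pt : ∀ x ∈ G, g x ≤ C1 := by
    intro x hxG
    obtain ⟨hxc, hxU⟩ := hxG
    have hgood : ∀ i, x i ≠ 1 ∧ Int.fract ((2:ℝ)^N * x i) ≤ 1 - δ := by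
      intro i
      have : x i ∉ badT N δ := by
        intro hmem
        exact hxU (Set.mem_iUnion.mpr ⟨i, hmem⟩)
      unfold badT at this
      rw [Set.mem_union, Set.mem_setOf_eq, Set.mem_singleton_iff] at this
      push_neg at this
      exact ⟨this.2, this.1⟩
    rw [hg]
    apply Real.rpow_le_rpow (abs_nonneg _) _ hp0
    exact good_bound d N hd hN f hf δ hδ x hxc hgood
  have hbad_pt : ∀ x ∈ B, g x ≤ C2 := by
    intro x hxB
    rw [hg]
    apply Real.rpow_le_rpow (abs_nonneg _) _ hp0
    exact bad_bound d N f hf δ _ x hxB.1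
  have hgnn : ∀ x, 0 ≤ g x := fun x => Real.rpow_nonneg (abs_nonneg _) p
  -- integrability
  have hintG : IntegrableOn g G volume := by
    haveI : IsFiniteMeasure (volume.restrict G) :=
      ⟨by rwa [Measure.restrict_apply_univ]⟩
    refine ⟨hgmG, HasFiniteIntegral.of_bounded (C := C1) ?_⟩
    rw [ae_restrict_iff' hGm]
    apply Filter.Eventually.of_forall
    intro x hx
    rw [Real.norm_eq_abs, abs_of_nonneg (hgnn x)]
    exact hgood_pt x hx
  have hintB : IntegrableOn g B volume := by
    haveI : IsFiniteMeasure (volume.restrict B) :=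
      ⟨by rwa [Measure.restrict_apply_univ]⟩
    refine ⟨hgmB, HasFiniteIntegral.of_bounded (C := C2) ?_⟩
    rw [ae_restrict_iff' hBm]
    apply Filter.Eventually.of_forall
    intro x hx
    rw [Real.norm_eq_abs, abs_of_nonneg (hgnn x)]
    exact hbad_pt x hx
  -- integral bounds
  have hIG : (∫ x in G, g x) ≤ C1 := by
    have h1 : ‖∫ x in G, g x‖ ≤ C1 * (volume G).toReal :=
      norm_setIntegral_le_of_norm_le_const hvolGfin
        (fun x hx => by rw [Real.norm_eq_abs, abs_of_nonneg (hgnn x)]; exact hgood_pt x hx)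
    have h2 : (volume G).toReal ≤ 1 := by
      apply ENNReal.toReal_le_of_le_ofReal zero_le_one
      rwa [ENNReal.ofReal_one]
    calc (∫ x in G, g x) ≤ ‖∫ x in G, g x‖ := le_abs_self _
      _ ≤ C1 * (volume G).toReal := h1
      _ ≤ C1 * 1 := mul_le_mul_of_nonneg_left h2 hC1nn
      _ = C1 := mul_one _
  have hIB : (∫ x in B, g x) ≤ C2 * (d * δ) := by
    have h1 : ‖∫ x in B, g x‖ ≤ C2 * (volume B).toReal :=
      norm_setIntegral_le_of_norm_le_const hvolBfin
        (fun x hx => by rw [Real.norm_eq_abs, abs_of_nonneg (hgnn x)]; exact hbad_pt x hx)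
    have h2 : (volume B).toReal ≤ d * δ := by
      apply ENNReal.toReal_le_of_le_ofReal (mul_nonneg (Nat.cast_nonneg d) hδ.1.le) hvolB
    calc (∫ x in B, g x) ≤ ‖∫ x in B, g x‖ := le_abs_self _
      _ ≤ C2 * (volume B).toReal := h1
      _ ≤ C2 * (d * δ) := mul_le_mul_of_nonneg_left h2 hC2nn
  -- assemble
  have hC2split : C2 = 2^p * (|f 0| + ω)^p := by
    rw [hC2, Real.mul_rpow (by norm_num) (by positivity)]
  calc (∫ x in unitCube d, g x) = (∫ x in G ∪ B, g x) := by rw [← hsplit]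
    _ = (∫ x in G, g x) + (∫ x in B, g x) :=
        setIntegral_union hdisj hBm hintG hintB
    _ ≤ C1 + C2 * (d * δ) := add_le_add hIG hIB
    _ = C1 + 2^p * d * δ * (|f 0| + ω)^p := by rw [hC2split]; ring
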